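/- (Computation of Υ_γ) Under the hypotheses of the previous statement with u ≠ 0, Υ_γ := ∑_{s ∈ F_{2^m}, Tr^m_k(s) = γ} ∑_{x ∈ F_{2^m}*} (-1)^{Tr_m(u s x^(-d)) + Tr_m(vx)} equals 2^m - 2^{m-k} if γ² = Tr^m_k(v u^e), and equals -2^{m-k} otherwise. -/

import Mathlib

open Finset Polynomial

set_option linter.unusedSectionVars false

namespace Stmt12Aux

variable {F : Type*} [Field F] [Fintype F] [DecidableEq F] [Algebra (ZMod 2) F]

/-- The additive character `y ↦ (-1)^{Tr y}`. -/
noncomputable def aχ (F : Type*) [Field F] [Fintype F] [Algebra (ZMod 2) F] (y : F) : ℤ :=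
  (-1) ^ (Algebra.trace (ZMod 2) F y).val

lemma zmod2_cases (z : ZMod 2) : z = 0 ∨ z = 1 := by revert z; decide

lemma aχ_zero : aχ F (0 : F) = 1 := by
  simp [aχ]

lemma aχ_eq_one {a : F} (h : Algebra.trace (ZMod 2) F a = 0) : aχ F a = 1 := by
  simp [aχ, h]

lemma aχ_eq_neg_one {a : F} (h : Algebra.trace (ZMod 2) F a ≠ 0) : aχ F a = -1 := by
  rcases zmod2_cases (Algebra.trace (ZMod 2) F a) with h' | h'
  · exact absurd h' h
  · simp [aχ, h', ZMod.val_one]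

lemma aχ_add (a b : F) : aχ F (a + b) = aχ F a * aχ F b := by
  unfold aχ
  rw [map_add]
  rcases zmod2_cases (Algebra.trace (ZMod 2) F a) with h | h <;>
    rcases zmod2_cases (Algebra.trace (ZMod 2) F b) with h' | h' <;>
      rw [h, h'] <;> decide

lemma aχ_of_tr_eq {a b : F} (h : Algebra.trace (ZMod 2) F a = Algebra.trace (ZMod 2) F b) :
    aχ F a = aχ F b := by unfold aχ; rw [h]

lemma tr_sq (y : F) :
    Algebra.trace (ZMod 2) F (y ^ 2) = Algebra.trace (ZMod 2) F y := by
  haveI : CharP F 2 := charP_of_injective_algebraMap (algebraMap (ZMod 2) F).injective 2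
  haveI : PerfectRing F 2 := PerfectRing.ofFiniteOfIsReduced 2 F
  let σ : F ≃ₐ[ZMod 2] F := AlgEquiv.ofRingEquiv (f := frobeniusEquiv F 2)
    (fun r => by
      show (algebraMap (ZMod 2) F r) ^ 2 = _
      rw [← map_pow]; congr 1; revert r; decide)
  have := Algebra.trace_eq_of_algEquiv σ y
  exact this

lemma tr_pow2 (j : ℕ) (y : F) :
    Algebra.trace (ZMod 2) F (y ^ 2 ^ j) = Algebra.trace (ZMod 2) F y := by
  induction j with
  | zero => simp
  | succ j ih =>
      have : y ^ 2 ^ (j + 1) = (y ^ 2 ^ j) ^ 2 := by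
        rw [← pow_mul, pow_succ]
      rw [this, tr_sq, ih]

lemma sum_aχ_eq_zero {W : Finset F} (hW : ∀ a ∈ W, ∀ b ∈ W, a + b ∈ W) {t a₀ : F}
    (ha₀ : a₀ ∈ W) (htr : Algebra.trace (ZMod 2) F (t * a₀) ≠ 0) :
    ∑ a ∈ W, aχ F (t * a) = 0 := by
  haveI : CharP F 2 := charP_of_injective_algebraMap (algebraMap (ZMod 2) F).injective 2
  have h2 : ∀ a : F, a + a = 0 := fun a => CharTwo.add_self_eq_zero a
  have key : ∑ a ∈ W, aχ F (t * a) = ∑ a ∈ W, aχ F (t * (a + a₀)) := by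
    refine Finset.sum_nbij' (fun a => a + a₀) (fun a => a + a₀) ?_ ?_ ?_ ?_ ?_
    · exact fun a ha => hW a ha a₀ ha₀
    · exact fun a ha => hW a ha a₀ ha₀
    · intro a _; show a + a₀ + a₀ = a; rw [add_assoc, h2, add_zero]
    · intro a _; show a + a₀ + a₀ = a; rw [add_assoc, h2, add_zero]
    · intro a _; show aχ F (t * a) = aχ F (t * (a + a₀ + a₀)); rw [add_assoc, h2, add_zero]
  have key2 : ∀ a : F, aχ F (t * (a + a₀)) = aχ F (t * a) * (-1) := by
    intro a
    rw [mul_add, aχ_add, aχ_eq_neg_one htr]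
  rw [Finset.sum_congr rfl (fun a _ => key2 a)] at key
  rw [← Finset.sum_mul] at key
  omega

variable {F : Type*} [Field F] [Fintype F] [DecidableEq F] [Algebra (ZMod 2) F]

-- counting: |Ann W| * |W| = |F|
lemma card_ann_mul {W : Finset F} (h0 : (0 : F) ∈ W) (hW : ∀ a ∈ W, ∀ b ∈ W, a + b ∈ W) :
    ((univ.filter fun t : F => ∀ s ∈ W, Algebra.trace (ZMod 2) F (t * s) = 0).card) * W.card
      = Fintype.card F := by
  haveI : Module.Finite (ZMod 2) F := Module.Finite.of_finite
  set Ann := univ.filter fun t : F => ∀ s ∈ W, Algebra.trace (ZMod 2) F (t * s) = 0 with hAnn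
  have h1 : ∀ t : F, ∑ s ∈ W, aχ F (t * s)
      = if t ∈ Ann then (W.card : ℤ) else 0 := by
    intro t
    by_cases ht : t ∈ Ann
    · rw [if_pos ht]
      rw [hAnn, mem_filter] at ht
      rw [Finset.sum_congr rfl (fun s hs => aχ_eq_one (ht.2 s hs))]
      simp
    · rw [if_neg ht]
      rw [hAnn, mem_filter] at ht
      push_neg at ht
      obtain ⟨s, hs, htr⟩ := ht (mem_univ t)
      exact sum_aχ_eq_zero hW hs htr
  have h2 : ∀ s : F, s ≠ 0 → ∑ t : F, aχ F (t * s) = 0 := by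
    intro s hs
    have hne : ∃ b : F, Algebra.trace (ZMod 2) F (s * b) ≠ 0 := by
      by_contra h
      push_neg at h
      exact hs ((traceForm_nondegenerate (ZMod 2) F).1 s (fun y => h y))
    obtain ⟨b, hb⟩ := hne
    have := sum_aχ_eq_zero (W := univ) (fun a _ b _ => mem_univ _)
      (mem_univ b) hb
    rw [← this]
    exact Finset.sum_congr rfl (fun t _ => by rw [mul_comm])
  have calc1 : ∑ t : F, ∑ s ∈ W, aχ F (t * s) = (Ann.card : ℤ) * W.card := by
    rw [Finset.sum_congr rfl (fun t _ => h1 t)]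
    rw [Finset.sum_ite_mem]
    rw [univ_inter, Finset.sum_const]
    simp [mul_comm]
  have calc2 : ∑ t : F, ∑ s ∈ W, aχ F (t * s) = (Fintype.card F : ℤ) := by
    rw [Finset.sum_comm]
    have : ∀ s ∈ W, ∑ t : F, aχ F (t * s)
        = if s = 0 then (Fintype.card F : ℤ) else 0 := by
      intro s _
      by_cases hs : s = 0
      · subst hs
        simp [aχ_zero, Finset.card_univ]
      · rw [if_neg hs]; exact h2 s hs
    rw [Finset.sum_congr rfl this, Finset.sum_ite_eq' W 0 (fun _ => (Fintype.card F : ℤ))]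
    rw [if_pos h0]
  have := calc1.symm.trans calc2
  exact_mod_cast this



lemma card_A {k m : ℕ} (hkpos : 0 < k) (hm : 0 < m) (hk : k ∣ m)
    (hF : Fintype.card F = 2 ^ m) :
    (univ.filter fun a : F => a ^ 2 ^ k = a).card = 2 ^ k := by
  have hq1 : 1 < 2 ^ k := Nat.one_lt_two_pow_iff.mpr (by omega)
  have hQ1 : 1 < 2 ^ m := Nat.one_lt_two_pow_iff.mpr (by omega)
  obtain ⟨n, hmn⟩ := hk
  have hdvd_nat : 2 ^ k - 1 ∣ 2 ^ m - 1 := by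
    have := Nat.sub_dvd_pow_sub_pow (2 ^ k) 1 n
    simpa [← pow_mul, ← hmn] using this
  set f : F[X] := X ^ 2 ^ k - X with hf
  set h : F[X] := X ^ 2 ^ m - X with hh
  have hfne : f ≠ 0 := FiniteField.X_pow_card_sub_X_ne_zero F hq1
  have hhne : h ≠ 0 := FiniteField.X_pow_card_sub_X_ne_zero F hQ1
  have hfdeg : f.natDegree = 2 ^ k := FiniteField.X_pow_card_sub_X_natDegree_eq F hq1
  have hhdeg : h.natDegree = 2 ^ m := FiniteField.X_pow_card_sub_X_natDegree_eq F hQ1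
  have hfd : f ∣ h := by
    obtain ⟨c, hc⟩ := hdvd_nat
    have h1 : (X : F[X]) ^ (2 ^ k - 1) - 1 ∣ X ^ (2 ^ m - 1) - 1 := by
      have := sub_dvd_pow_sub_pow ((X : F[X]) ^ (2 ^ k - 1)) 1 c
      simpa [← pow_mul, ← hc] using this
    have e1 : f = X * (X ^ (2 ^ k - 1) - 1) := by
      rw [hf, mul_sub, mul_one, ← pow_succ']
      congr 2
      omega
    have e2 : h = X * (X ^ (2 ^ m - 1) - 1) := by
      rw [hh, mul_sub, mul_one, ← pow_succ']
      congr 2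
      omega
    rw [e1, e2]
    exact mul_dvd_mul_left X h1
  have hroots : h.roots = Finset.univ.val := by
    have := FiniteField.roots_X_pow_card_sub_X F
    rwa [hF] at this
  obtain ⟨g, hg⟩ := hfd
  have hgne : g ≠ 0 := by
    rintro rfl
    rw [mul_zero] at hg
    exact hhne hg
  have hdeg : f.natDegree + g.natDegree = 2 ^ m := by
    rw [← Polynomial.natDegree_mul hfne hgne, ← hg, hhdeg]
  have hcards : Multiset.card f.roots + Multiset.card g.roots = 2 ^ m := by
    have : h.roots = f.roots + g.roots := by rw [hg, Polynomial.roots_mul (hg ▸ hhne)]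
    have hcard : Multiset.card h.roots = 2 ^ m := by
      rw [hroots, ← Finset.card_def, Finset.card_univ, hF]
    rw [this, Multiset.card_add] at hcard
    exact hcard
  have hb1 : Multiset.card f.roots ≤ 2 ^ k := hfdeg ▸ Polynomial.card_roots' f
  have hb2 : Multiset.card g.roots ≤ g.natDegree := Polynomial.card_roots' g
  have hfcard : Multiset.card f.roots = 2 ^ k := by omega
  have hnodup : f.roots.Nodup := by
    have hle : f.roots ≤ h.roots := by
      rw [hg, Polynomial.roots_mul (hg ▸ hhne)]
      exact Multiset.le_add_right _ _
    exact Multiset.nodup_of_le hle (hroots ▸ Finset.univ.nodup)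
  have hset : (univ.filter fun a : F => a ^ 2 ^ k = a) = f.roots.toFinset := by
    ext a
    simp only [mem_filter, mem_univ, true_and, Multiset.mem_toFinset,
      Polynomial.mem_roots hfne, Polynomial.mem_roots (FiniteField.X_pow_card_sub_X_ne_zero F hq1),
      Polynomial.IsRoot.def, hf, Polynomial.eval_sub,
      Polynomial.eval_pow, Polynomial.eval_X, sub_eq_zero]
  rw [hset, Multiset.toFinset_card_of_nodup hnodup, hfcard]

end Stmt12Aux

open Stmt12Aux in
/-- Computation of `Υ_γ`: for `u ≠ 0` and `γ ∈ F_{2^k}`,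
`∑_{Tr^m_k(s)=γ} ∑_{x≠0} (-1)^{Tr_m(u s x^(-d))+Tr_m(vx)}` equals
`2^m - 2^{m-k}` if `γ² = Tr^m_k(v u^e)`, and `-2^{m-k}` otherwise. -/
theorem stmt_12 (m k : ℕ) (hm : 0 < m) (hkpos : 0 < k) (hk : k ∣ m)
    (hgcd : Nat.gcd (2 ^ m - 1) (2 ^ k + 1) = 1)
    (e d : ℕ) (he : e = 2 ^ m - 2 ^ k - 2) (hd : (e * d) % (2 ^ m - 1) = 1)
    (F : Type*) [Field F] [Fintype F] [DecidableEq F] [Algebra (ZMod 2) F]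
    (hF : Fintype.card F = 2 ^ m)
    (relTr : F → F) (hrelTr : ∀ s, relTr s = ∑ i ∈ Finset.range (m / k), s ^ (2 ^ (k * i)))
    (u v : F) (hu : u ≠ 0) (γ : F) (hγ : γ ^ (2 ^ k) = γ) :
    ∑ s ∈ Finset.univ.filter (fun s : F => relTr s = γ),
      ∑ x ∈ Finset.univ.filter (fun x : F => x ≠ 0),
        (-1 : ℤ) ^ (Algebra.trace (ZMod 2) F (u * s * (x ^ d)⁻¹)).val *
          (-1 : ℤ) ^ (Algebra.trace (ZMod 2) F (v * x)).val =
      if γ ^ 2 = relTr (v * u ^ e) then (2 ^ m - 2 ^ (m - k) : ℤ)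
      else -(2 ^ (m - k) : ℤ) := by
  classical
  haveI hchar : CharP F 2 := charP_of_injective_algebraMap (algebraMap (ZMod 2) F).injective 2
  have h2 : ∀ a : F, a + a = 0 := fun a => CharTwo.add_self_eq_zero a
  -- `k < m`
  have hkm : k < m := by
    rcases lt_or_eq_of_le (Nat.le_of_dvd hm hk) with h | h
    · exact h
    · exfalso
      have he0 : e = 0 := by rw [he, h]; omega
      rw [he0, zero_mul, Nat.zero_mod] at hd
      omega
  obtain ⟨n, hmn⟩ := hk
  have h2kpos : 0 < 2 ^ k := Nat.pow_pos (n := k) (by norm_num)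
  have h2mpos : 0 < 2 ^ m := Nat.pow_pos (n := m) (by norm_num)
  have hn1 : 1 < n := by
    have hn0 : n ≠ 0 := by rintro rfl; omega
    have hn1' : n ≠ 1 := by rintro rfl; omega
    omega
  have hnodd : n % 2 = 1 := by
    by_contra hodd
    obtain ⟨j, hj⟩ : 2 ∣ n := by omega
    have hd1 : 2 ^ (2 * k) - 1 ∣ 2 ^ m - 1 := by
      have := Nat.sub_dvd_pow_sub_pow (2 ^ (2 * k)) 1 j
      have hexp : 2 * k * j = m := by rw [hmn, hj]; ring
      simpa [← pow_mul, hexp] using this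
    have hd2 : 2 ^ k + 1 ∣ 2 ^ (2 * k) - 1 := by
      refine ⟨2 ^ k - 1, ?_⟩
      have hsq : 2 ^ (2 * k) = 2 ^ k * 2 ^ k := by rw [two_mul, pow_add]
      obtain ⟨t, ht⟩ : ∃ t, 2 ^ k = t + 1 := ⟨2 ^ k - 1, by omega⟩
      rw [hsq, ht, Nat.add_sub_cancel]
      have : (t + 1) * (t + 1) = (t + 1 + 1) * t + 1 := by ring
      omega
    have hdvd : 2 ^ k + 1 ∣ Nat.gcd (2 ^ m - 1) (2 ^ k + 1) :=
      Nat.dvd_gcd (hd2.trans hd1) dvd_rfl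
    rw [hgcd] at hdvd
    have := Nat.le_of_dvd one_pos hdvd
    omega
  -- power facts
  have hpow_card : ∀ x : F, x ^ 2 ^ m = x := by
    intro x; have := FiniteField.pow_card x; rwa [hF] at this
  have hpow_sub_one : ∀ x : F, x ≠ 0 → x ^ (2 ^ m - 1) = 1 := by
    intro x hx; have := FiniteField.pow_card_sub_one_eq_one x hx; rwa [hF] at this
  have hde : ∀ x : F, x ≠ 0 → x ^ (e * d) = x := by
    intro x hx
    have hmod := Nat.div_add_mod (e * d) (2 ^ m - 1)
    rw [hd] at hmod
    calc x ^ (e * d) = x ^ ((2 ^ m - 1) * (e * d / (2 ^ m - 1)) + 1) := by rw [hmod]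
    _ = (x ^ (2 ^ m - 1)) ^ (e * d / (2 ^ m - 1)) * x := by rw [pow_add, pow_mul, pow_one]
    _ = x := by rw [hpow_sub_one x hx, one_pow, one_mul]
  have hxd : ∀ x : F, x ≠ 0 → (x ^ d) ^ e = x := by
    intro x hx; rw [← pow_mul, mul_comm]; exact hde x hx
  have hxe : ∀ x : F, x ≠ 0 → (x ^ e) ^ d = x := by
    intro x hx; rw [← pow_mul]; exact hde x hx
  -- the subfield `A` and the kernel `V`
  set A := univ.filter (fun a : F => a ^ 2 ^ k = a) with hA
  set V := univ.filter (fun s : F => relTr s = 0) with hV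
  have hmemA : ∀ a : F, a ∈ A ↔ a ^ 2 ^ k = a := by
    intro a; rw [hA, mem_filter]; simp
  have hA_pow : ∀ a : F, a ^ 2 ^ k = a → ∀ j : ℕ, a ^ 2 ^ (k * j) = a := by
    intro a ha j
    induction j with
    | zero => simp
    | succ j ih =>
        have hexp : 2 ^ (k * (j + 1)) = 2 ^ (k * j) * 2 ^ k := by
          rw [← pow_add, Nat.mul_succ]
        rw [hexp, pow_mul, ih, ha]
  have hA_zero : (0 : F) ∈ A := by rw [hmemA]; exact zero_pow (by positivity)
  have hA_one : (1 : F) ∈ A := by rw [hmemA]; exact one_pow _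
  have hA_mul : ∀ a ∈ A, ∀ b ∈ A, a * b ∈ A := by
    intro a ha b hb
    rw [hmemA] at ha hb ⊢
    rw [mul_pow, ha, hb]
  have hA_add : ∀ a ∈ A, ∀ b ∈ A, a + b ∈ A := by
    intro a ha b hb
    rw [hmemA] at ha hb ⊢
    rw [add_pow_char_pow, ha, hb]
  have hA_inv : ∀ a ∈ A, a⁻¹ ∈ A := by
    intro a ha
    rw [hmemA] at ha ⊢
    rw [inv_pow, ha]
  have hcardA : A.card = 2 ^ k := card_A hkpos hm ⟨n, hmn⟩ hF
  -- `relTr` basic facts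
  have hkn : m / k = n := by rw [hmn, Nat.mul_div_cancel_left n hkpos]
  have hrel : ∀ s, relTr s = ∑ i ∈ range n, s ^ 2 ^ (k * i) := by
    intro s; rw [hrelTr, hkn]
  have hrel_zero : relTr 0 = 0 := by
    rw [hrel]
    refine Finset.sum_eq_zero fun i _ => zero_pow (by positivity)
  have hrel_add : ∀ a b : F, relTr (a + b) = relTr a + relTr b := by
    intro a b
    rw [hrel, hrel, hrel, ← Finset.sum_add_distrib]
    exact Finset.sum_congr rfl fun i _ => add_pow_char_pow a b 2 (k * i)
  have hrel_memA : ∀ y : F, relTr y ∈ A := by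
    intro y
    rw [hmemA, hrel]
    have hmap : (∑ i ∈ range n, y ^ 2 ^ (k * i)) ^ 2 ^ k
        = ∑ i ∈ range n, (y ^ 2 ^ (k * i)) ^ 2 ^ k := by
      have := map_sum (iterateFrobenius F 2 k) (fun i => y ^ 2 ^ (k * i)) (range n)
      simp only [iterateFrobenius_def] at this
      exact this
    rw [hmap]
    have hterm : ∀ i, (y ^ 2 ^ (k * i)) ^ 2 ^ k = y ^ 2 ^ (k * (i + 1)) := by
      intro i
      rw [← pow_mul, ← pow_add, ← Nat.mul_succ]
    rw [Finset.sum_congr rfl fun i _ => hterm i]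
    -- shift the sum
    have hshift : ∑ i ∈ range n, y ^ 2 ^ (k * (i + 1)) + y ^ 2 ^ (k * 0)
        = ∑ i ∈ range n, y ^ 2 ^ (k * i) + y ^ 2 ^ (k * n) := by
      rw [← Finset.sum_range_succ' (fun i => y ^ 2 ^ (k * i)) n,
        Finset.sum_range_succ (fun i => y ^ 2 ^ (k * i)) n]
    have hend : y ^ 2 ^ (k * n) = y ^ 2 ^ (k * 0) := by
      rw [← hmn, hpow_card]; simp
    rw [hend] at hshift
    exact add_right_cancel hshift
  have hrel_one : relTr 1 = 1 := by
    rw [hrel]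
    simp only [one_pow, Finset.sum_const, Finset.card_range, nsmul_eq_mul, mul_one]
    obtain ⟨j, hj⟩ : ∃ j, n = 2 * j + 1 := ⟨n / 2, by omega⟩
    rw [hj]
    push_cast
    rw [CharTwo.two_eq_zero]
    ring
  -- the key trace identity
  have htr_rel : ∀ t : F, t ∈ A → ∀ y : F,
      Algebra.trace (ZMod 2) F (t * relTr y) = Algebra.trace (ZMod 2) F (t * y) := by
    intro t ht y
    rw [hmemA] at ht
    rw [hrel, Finset.mul_sum, map_sum]
    have hterm : ∀ i ∈ range n, Algebra.trace (ZMod 2) F (t * y ^ 2 ^ (k * i))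
        = Algebra.trace (ZMod 2) F (t * y) := by
      intro i hi
      have hile : i ≤ n := le_of_lt (mem_range.mp hi)
      have step1 := tr_pow2 (F := F) (k * (n - i)) (t * y ^ 2 ^ (k * i))
      rw [← step1]
      congr 1
      rw [mul_pow, hA_pow t ht (n - i), ← pow_mul, ← pow_add]
      have hexp : k * i + k * (n - i) = m := by
        rw [← Nat.mul_add, Nat.add_sub_cancel' hile, ← hmn]
      rw [hexp, hpow_card]
    rw [Finset.sum_congr rfl hterm, Finset.sum_const, Finset.card_range]
    have hsm : ∀ x : ZMod 2, n • x = x := by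
      intro x
      rw [nsmul_eq_mul]
      have hcast : (n : ZMod 2) = 1 := by
        obtain ⟨j, hj⟩ : ∃ j, n = 2 * j + 1 := ⟨n / 2, by omega⟩
        rw [hj]; push_cast
        have : (2 : ZMod 2) = 0 := by decide
        rw [this]; ring
      rw [hcast, one_mul]
    exact hsm _
  -- annihilator of `V`
  set Ann := univ.filter (fun t : F => ∀ s ∈ V, Algebra.trace (ZMod 2) F (t * s) = 0) with hAnn
  have hV_zero : (0 : F) ∈ V := by rw [hV, mem_filter]; exact ⟨mem_univ _, hrel_zero⟩
  have hV_add : ∀ a ∈ V, ∀ b ∈ V, a + b ∈ V := by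
    intro a ha b hb
    rw [hV, mem_filter] at ha hb ⊢
    exact ⟨mem_univ _, by rw [hrel_add, ha.2, hb.2, add_zero]⟩
  have hAsubAnn : A ⊆ Ann := by
    intro t ht
    rw [hAnn, mem_filter]
    refine ⟨mem_univ _, fun s hs => ?_⟩
    have hs0 : relTr s = 0 := by rw [hV, mem_filter] at hs; exact hs.2
    have htt := htr_rel t ht s
    rw [← htt, hs0, mul_zero, map_zero]
  have hcardAnnV : Ann.card * V.card = 2 ^ m := by
    have := card_ann_mul (F := F) hV_zero hV_add
    rwa [hF] at this
  -- fibers of `relTr` all have the cardinality of `V`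
  have hfibcard : ∀ b : F, b ∈ univ.image relTr →
      (univ.filter (fun s : F => relTr s = b)).card = V.card := by
    intro b hb
    obtain ⟨s₀, _, hs₀⟩ := mem_image.mp hb
    refine Finset.card_nbij' (fun s => s + s₀) (fun s => s + s₀) ?_ ?_ ?_ ?_
    · intro s hs
      rw [mem_coe, mem_filter] at hs
      rw [mem_coe, hV, mem_filter]
      exact ⟨mem_univ _, by rw [hrel_add, hs.2, hs₀, h2]⟩
    · intro s hs
      rw [mem_coe, hV, mem_filter] at hs
      rw [mem_coe, mem_filter]
      exact ⟨mem_univ _, by rw [hrel_add, hs.2, hs₀, zero_add]⟩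
    · intro s _; show s + s₀ + s₀ = s; rw [add_assoc, h2, add_zero]
    · intro s _; show s + s₀ + s₀ = s; rw [add_assoc, h2, add_zero]
  have him2m : (univ.image relTr).card * V.card = 2 ^ m := by
    have hcover := Finset.card_eq_sum_card_fiberwise
      (f := relTr) (s := (univ : Finset F)) (t := univ.image relTr)
      (fun x _ => mem_image_of_mem relTr (mem_univ x))
    rw [Finset.card_univ, hF] at hcover
    rw [Finset.sum_congr rfl hfibcard] at hcover
    rw [Finset.sum_const, smul_eq_mul] at hcover
    omega
  have himsubA : univ.image relTr ⊆ A := by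
    intro b hb
    obtain ⟨y, _, hy⟩ := mem_image.mp hb
    rw [← hy]; exact hrel_memA y
  have hVpos : 0 < V.card := Finset.card_pos.mpr ⟨0, hV_zero⟩
  have hcardAnn_eq : Ann.card = (univ.image relTr).card :=
    Nat.eq_of_mul_eq_mul_right hVpos (by rw [hcardAnnV, him2m])
  have himcard : (univ.image relTr).card = 2 ^ k := by
    have h1 : (univ.image relTr).card ≤ A.card := Finset.card_le_card himsubA
    have h2' : A.card ≤ Ann.card := Finset.card_le_card hAsubAnn
    omega
  have hAeqAnn : A = Ann := Finset.eq_of_subset_of_card_le hAsubAnn (by omega)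
  have himeqA : univ.image relTr = A :=
    Finset.eq_of_subset_of_card_le himsubA (by omega)
  have hcardV : V.card = 2 ^ (m - k) := by
    have hsplit : 2 ^ k * 2 ^ (m - k) = 2 ^ m := by
      rw [← pow_add]; congr 1; omega
    rw [himcard] at him2m
    exact Nat.eq_of_mul_eq_mul_left h2kpos (by omega)
  -- pick `s₀` in the fiber over `γ`
  have hγA : γ ∈ A := (hmemA γ).mpr hγ
  obtain ⟨s₀, _, hs₀⟩ := mem_image.mp (himeqA ▸ hγA)
  -- the fiber sum
  have hfiber : ∀ t : F, ∑ s ∈ univ.filter (fun s : F => relTr s = γ), aχ F (t * s)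
      = (if t ∈ A then ((2 : ℤ) ^ (m - k)) else 0) * aχ F (t * s₀) := by
    intro t
    have hre : ∑ s ∈ univ.filter (fun s : F => relTr s = γ), aχ F (t * s)
        = ∑ s ∈ V, aχ F (t * s) * aχ F (t * s₀) := by
      refine Finset.sum_nbij' (fun s => s + s₀) (fun s => s + s₀) ?_ ?_ ?_ ?_ ?_
      · intro s hs; rw [mem_filter] at hs; rw [hV, mem_filter]
        exact ⟨mem_univ _, by rw [hrel_add, hs.2, hs₀, h2]⟩
      · intro s hs; rw [hV, mem_filter] at hs; rw [mem_filter]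
        exact ⟨mem_univ _, by rw [hrel_add, hs.2, hs₀, zero_add]⟩
      · intro s _; show s + s₀ + s₀ = s; rw [add_assoc, h2, add_zero]
      · intro s _; show s + s₀ + s₀ = s; rw [add_assoc, h2, add_zero]
      · intro s _
        show aχ F (t * s) = aχ F (t * (s + s₀)) * aχ F (t * s₀)
        rw [mul_add, aχ_add, mul_assoc, ← aχ_add, h2, aχ_zero, mul_one]
    rw [hre, ← Finset.sum_mul]
    congr 1
    by_cases ht : t ∈ A
    · rw [if_pos ht]
      have hallz : ∀ s ∈ V, Algebra.trace (ZMod 2) F (t * s) = 0 := by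
        have hmem := hAsubAnn ht
        rw [hAnn, mem_filter] at hmem; exact hmem.2
      rw [Finset.sum_congr rfl (fun s hs => aχ_eq_one (hallz s hs)), Finset.sum_const, hcardV,
        nsmul_eq_mul, mul_one]
      push_cast
      ring
    · rw [if_neg ht]
      have htAnn : t ∉ Ann := by rw [← hAeqAnn]; exact ht
      rw [hAnn, mem_filter] at htAnn
      push_neg at htAnn
      obtain ⟨s, hsV, hs⟩ := htAnn (mem_univ t)
      exact sum_aχ_eq_zero hV_add hsV hs
  -- helper inverse computations
  have hinv1 : ∀ x : F, x ≠ 0 → u * (u * (x ^ d)⁻¹)⁻¹ = x ^ d := by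
    intro x hx
    have hxd0 : x ^ d ≠ 0 := pow_ne_zero d hx
    field_simp
  have hinv2 : ∀ c : F, c ≠ 0 → u * (((u * c⁻¹) ^ e) ^ d)⁻¹ = c := by
    intro c hc
    have huc : u * c⁻¹ ≠ 0 := mul_ne_zero hu (inv_ne_zero hc)
    rw [hxe _ huc, mul_inv_rev, inv_inv]
    field_simp
  -- exponent facts for elements of `A`
  have hkexp : 2 * 2 ^ (k - 1) = 2 ^ k := by
    rw [← pow_succ']; congr 1; omega
  have he2 : e + 2 = 2 ^ m - 2 ^ k := by
    have hle : 2 ^ (k + 1) ≤ 2 ^ m := Nat.pow_le_pow_right (by norm_num) (by omega)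
    have hss : 2 ^ (k + 1) = 2 ^ k * 2 := pow_succ 2 k
    rw [he]; omega
  have hce : ∀ c : F, c ∈ A → c ≠ 0 → (c⁻¹) ^ e = c * c := by
    intro c hcA hc0
    have hcc : c ^ 2 ^ k = c := (hmemA c).mp hcA
    have hmain : c ^ e * (c * c) = 1 := by
      have hstep : c ^ e * (c * c) = c ^ (2 ^ m - 2 ^ k) := by
        rw [← he2, pow_add]; ring
      have hsplit : c ^ 2 ^ k * c ^ (2 ^ m - 2 ^ k) = c ^ 2 ^ m := by
        rw [← pow_add]; congr 1
        have : 2 ^ k ≤ 2 ^ m := Nat.pow_le_pow_right (by norm_num) (by omega)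
        omega
      rw [hcc, hpow_card] at hsplit
      have := mul_left_cancel₀ hc0 (hsplit.trans (mul_one c).symm)
      rw [hstep, this]
    have hpe : c ^ e = (c * c)⁻¹ := eq_inv_of_mul_eq_one_left ?_
    · rw [inv_pow, hpe, inv_inv]
    · linear_combination hmain
  -- the main computation
  have hmain : ∑ s ∈ univ.filter (fun s : F => relTr s = γ),
      ∑ x ∈ univ.filter (fun x : F => x ≠ 0),
        aχ F (u * s * (x ^ d)⁻¹) * aχ F (v * x)
      = (2 : ℤ) ^ (m - k) *
          ∑ b ∈ A.erase 0, aχ F (b * (γ ^ 2 + relTr (v * u ^ e))) := by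
    rw [Finset.sum_comm]
    calc ∑ x ∈ univ.filter (fun x : F => x ≠ 0), ∑ s ∈ univ.filter (fun s : F => relTr s = γ),
          aχ F (u * s * (x ^ d)⁻¹) * aχ F (v * x)
        = ∑ x ∈ univ.filter (fun x : F => x ≠ 0),
            ((if u * (x ^ d)⁻¹ ∈ A then ((2 : ℤ) ^ (m - k)) else 0) *
              aχ F ((u * (x ^ d)⁻¹) * s₀) * aχ F (v * x)) := by
          refine Finset.sum_congr rfl fun x _ => ?_
          rw [← hfiber (u * (x ^ d)⁻¹), Finset.sum_mul]
          refine Finset.sum_congr rfl fun s _ => ?_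
          have harg : u * s * (x ^ d)⁻¹ = u * (x ^ d)⁻¹ * s := by ring
          rw [harg]
      _ = ∑ x ∈ univ.filter (fun x : F => x ≠ 0),
            (if u * (x ^ d)⁻¹ ∈ A then
              (2 : ℤ) ^ (m - k) * aχ F ((u * (x ^ d)⁻¹) * s₀) * aχ F (v * x) else 0) := by
          refine Finset.sum_congr rfl fun x _ => ?_
          by_cases h : u * (x ^ d)⁻¹ ∈ A
          · rw [if_pos h, if_pos h]
          · rw [if_neg h, if_neg h, zero_mul, zero_mul]
      _ = ∑ x ∈ (univ.filter (fun x : F => x ≠ 0)).filter (fun x => u * (x ^ d)⁻¹ ∈ A),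
            (2 : ℤ) ^ (m - k) * aχ F ((u * (x ^ d)⁻¹) * s₀) * aχ F (v * x) := by
          rw [Finset.sum_filter, Finset.sum_filter]
          simp only [Finset.sum_filter]
      _ = ∑ c ∈ A.erase 0,
            (2 : ℤ) ^ (m - k) * aχ F (c * s₀) * aχ F (v * (u * c⁻¹) ^ e) := by
          refine Finset.sum_nbij' (fun x => u * (x ^ d)⁻¹) (fun c => (u * c⁻¹) ^ e) ?_ ?_ ?_ ?_ ?_
          · intro x hx
            rw [mem_filter, mem_filter] at hx
            have hx0 : x ≠ 0 := hx.1.2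
            refine Finset.mem_erase.mpr ⟨?_, hx.2⟩
            exact mul_ne_zero hu (inv_ne_zero (pow_ne_zero d hx0))
          · intro c hc
            rw [Finset.mem_erase] at hc
            rw [mem_filter, mem_filter]
            have huc : u * c⁻¹ ≠ 0 := mul_ne_zero hu (inv_ne_zero hc.1)
            refine ⟨⟨mem_univ _, pow_ne_zero e huc⟩, ?_⟩
            rw [hinv2 c hc.1]
            exact hc.2
          · intro x hx
            rw [mem_filter, mem_filter] at hx
            show (u * (u * (x ^ d)⁻¹)⁻¹) ^ e = x
            rw [hinv1 x hx.1.2, hxd x hx.1.2]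
          · intro c hc
            rw [Finset.mem_erase] at hc
            exact hinv2 c hc.1
          · intro x hx
            rw [mem_filter, mem_filter] at hx
            have hux : u * (u * (x ^ d)⁻¹)⁻¹ = x ^ d := hinv1 x hx.1.2
            show (2 : ℤ) ^ (m - k) * aχ F ((u * (x ^ d)⁻¹) * s₀) * aχ F (v * x)
              = (2 : ℤ) ^ (m - k) * aχ F ((u * (x ^ d)⁻¹) * s₀) *
                  aχ F (v * (u * (u * (x ^ d)⁻¹)⁻¹) ^ e)
            rw [hux, hxd x hx.1.2]
      _ = ∑ c ∈ A.erase 0,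
            (2 : ℤ) ^ (m - k) * aχ F ((c * c) * (γ ^ 2 + relTr (v * u ^ e))) := by
          refine Finset.sum_congr rfl fun c hc => ?_
          rw [Finset.mem_erase] at hc
          obtain ⟨hc0, hcA⟩ := hc
          have hccA : c * c ∈ A := hA_mul c hcA c hcA
          have h1 : aχ F (c * s₀) = aχ F ((c * c) * γ ^ 2) := by
            apply aχ_of_tr_eq
            have t1 := htr_rel c hcA s₀
            rw [hs₀] at t1
            rw [← t1]
            have t2 := tr_sq (F := F) (c * γ)
            have harg : (c * γ) ^ 2 = c * c * γ ^ 2 := by ring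
            rw [harg] at t2
            rw [← t2]
          have h2' : aχ F (v * (u * c⁻¹) ^ e) = aχ F ((c * c) * relTr (v * u ^ e)) := by
            have harg : v * (u * c⁻¹) ^ e = (c * c) * (v * u ^ e) := by
              rw [mul_pow, hce c hcA hc0]; ring
            rw [harg]
            exact aχ_of_tr_eq (htr_rel (c * c) hccA (v * u ^ e)).symm
          rw [h1, h2', mul_assoc, ← aχ_add, ← mul_add]
      _ = (2 : ℤ) ^ (m - k) *
            ∑ c ∈ A.erase 0, aχ F ((c * c) * (γ ^ 2 + relTr (v * u ^ e))) := by
          rw [Finset.mul_sum]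
      _ = (2 : ℤ) ^ (m - k) *
            ∑ b ∈ A.erase 0, aχ F (b * (γ ^ 2 + relTr (v * u ^ e))) := by
          congr 1
          refine Finset.sum_nbij' (fun c => c * c) (fun b => b ^ 2 ^ (k - 1)) ?_ ?_ ?_ ?_ ?_
          · intro c hc
            rw [Finset.mem_erase] at hc ⊢
            exact ⟨mul_ne_zero hc.1 hc.1, hA_mul c hc.2 c hc.2⟩
          · intro b hb
            rw [Finset.mem_erase] at hb ⊢
            refine ⟨pow_ne_zero _ hb.1, ?_⟩
            rw [hmemA]
            have hbb := (hmemA b).mp hb.2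
            rw [← pow_mul, mul_comm (2 ^ (k - 1)) (2 ^ k), pow_mul, hbb]
          · intro c hc
            rw [Finset.mem_erase] at hc
            show (c * c) ^ 2 ^ (k - 1) = c
            have hcc := (hmemA c).mp hc.2
            rw [← sq, ← pow_mul, hkexp, hcc]
          · intro b hb
            rw [Finset.mem_erase] at hb
            show b ^ 2 ^ (k - 1) * b ^ 2 ^ (k - 1) = b
            have hbb := (hmemA b).mp hb.2
            rw [← sq, ← pow_mul, mul_comm (2 ^ (k - 1)) 2, hkexp, hbb]
          · intro c _; rfl
  refine Eq.trans hmain ?_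
  by_cases hcase : γ ^ 2 = relTr (v * u ^ e)
  · rw [if_pos hcase]
    have hδ : γ ^ 2 + relTr (v * u ^ e) = 0 := by rw [hcase]; exact h2 _
    rw [hδ]
    have hone : ∀ b ∈ A.erase 0, aχ F (b * 0) = 1 := fun b _ => by rw [mul_zero, aχ_zero]
    rw [Finset.sum_congr rfl hone, Finset.sum_const, Finset.card_erase_of_mem hA_zero, hcardA,
      nsmul_eq_mul, mul_one]
    have hcast : ((2 ^ k - 1 : ℕ) : ℤ) = 2 ^ k - 1 := by
      rw [Nat.cast_sub h2kpos]
      push_cast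
      ring
    rw [hcast, mul_sub, mul_one]
    have hpows : (2 : ℤ) ^ (m - k) * 2 ^ k = 2 ^ m := by rw [← pow_add]; congr 1; omega
    rw [hpows]
  · rw [if_neg hcase]
    have hδ0 : γ ^ 2 + relTr (v * u ^ e) ≠ 0 := by
      intro h0
      apply hcase
      have hback : γ ^ 2 = γ ^ 2 + (relTr (v * u ^ e) + relTr (v * u ^ e)) := by
        rw [h2, add_zero]
      rw [hback, ← add_assoc, h0, zero_add]
    have hγ2A : γ ^ 2 ∈ A := by
      have : γ ^ 2 = γ * γ := sq γ
      rw [this]; exact hA_mul γ hγA γ hγA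
    have hδA : γ ^ 2 + relTr (v * u ^ e) ∈ A := hA_add _ hγ2A _ (hrel_memA _)
    set δ := γ ^ 2 + relTr (v * u ^ e) with hδdef
    have hex : ∃ a ∈ A, Algebra.trace (ZMod 2) F (δ * a) ≠ 0 := by
      by_contra hall
      push_neg at hall
      have hvanish : ∀ a ∈ A, Algebra.trace (ZMod 2) F ((1 : F) * a) = 0 := by
        intro a ha
        rw [one_mul]
        have hrepr : a = δ * (δ⁻¹ * a) := by field_simp
        rw [hrepr]
        exact hall _ (hA_mul _ (hA_inv _ hδA) _ ha)
      set AnnA := univ.filter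
        (fun t : F => ∀ a ∈ A, Algebra.trace (ZMod 2) F (t * a) = 0) with hAnnA
      have h1mem : (1 : F) ∈ AnnA := by rw [hAnnA, mem_filter]; exact ⟨mem_univ _, hvanish⟩
      have hcard2 : AnnA.card * A.card = 2 ^ m := by
        have := card_ann_mul (F := F) hA_zero hA_add
        rwa [hF] at this
      have hVsub : V ⊆ AnnA := by
        intro s hs
        rw [hAnnA, mem_filter]
        refine ⟨mem_univ _, fun a ha => ?_⟩
        have hs0 : relTr s = 0 := by rw [hV, mem_filter] at hs; exact hs.2
        have htt := htr_rel a ha s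
        rw [hs0, mul_zero, map_zero] at htt
        rw [mul_comm]
        exact htt.symm
      have hAnnAcard : AnnA.card = 2 ^ (m - k) := by
        rw [hcardA] at hcard2
        have hs2 : 2 ^ (m - k) * 2 ^ k = 2 ^ m := by rw [← pow_add]; congr 1; omega
        exact Nat.eq_of_mul_eq_mul_right h2kpos (by omega)
      have hVA : V = AnnA := Finset.eq_of_subset_of_card_le hVsub (by
        rw [hAnnAcard, hcardV])
      have h1V : (1 : F) ∈ V := by rw [hVA]; exact h1mem
      rw [hV, mem_filter] at h1V
      exact (one_ne_zero : (1 : F) ≠ 0) (by rw [← hrel_one]; exact h1V.2)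
    obtain ⟨a₀, ha₀, htr0⟩ := hex
    have hsumA : ∑ b ∈ A, aχ F (δ * b) = 0 := sum_aχ_eq_zero hA_add ha₀ htr0
    have hsumA2 : ∑ b ∈ A, aχ F (b * δ) = 0 := by
      rw [← hsumA]; exact Finset.sum_congr rfl fun b _ => by rw [mul_comm]
    have hsplit : ∑ b ∈ A.erase 0, aχ F (b * δ) + aχ F ((0 : F) * δ) = ∑ b ∈ A, aχ F (b * δ) :=
      Finset.sum_erase_add A _ hA_zero
    rw [zero_mul, aχ_zero, hsumA2] at hsplit
    have hval : ∑ b ∈ A.erase 0, aχ F (b * δ) = -1 := by omega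
    rw [hval]
    ring
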